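/- For all even n ≥ 4 and all p with 0 ≤ p < (2n-4)/(5n-2), one has (1-p)·n!·(w_n - (n-2)(n-1)/2) + p·n!·(w_n - n(n+2)/2) > n!·(w_n - (n-2)(n+1)/2), where w_n = n(n-1)(n+2)·2^{n-4}/binomial(n, n/2). -/
import Mathlib

/-- For even `n ≥ 4` and `0 ≤ p < (2n-4)/(5n-2)`, the quantum value
`(1-p)·n!(w_n-(n-2)(n-1)/2) + p·n!(w_n-n(n+2)/2)` strictly exceeds the local bound
`n!(w_n-(n-2)(n+1)/2)`, where `w_n = n(n-1)(n+2)·2^{n-4}/C(n,n/2)`. -/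
theorem stmt18 (n : ℕ) (hev : Even n) (hn : 4 ≤ n)
    (w : ℚ)
    (hw : w = ((n : ℚ) * ((n : ℚ) - 1) * ((n : ℚ) + 2) * (2 : ℚ) ^ (n - 4)) /
      (n.choose (n / 2) : ℚ))
    (p : ℚ) (hp0 : 0 ≤ p) (hp1 : p < (2 * (n : ℚ) - 4) / (5 * (n : ℚ) - 2)) :
    (1 - p) * ((n.factorial : ℚ) * (w - ((n : ℚ) - 2) * ((n : ℚ) - 1) / 2))
      + p * ((n.factorial : ℚ) * (w - (n : ℚ) * ((n : ℚ) + 2) / 2))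
      > (n.factorial : ℚ) * (w - ((n : ℚ) - 2) * ((n : ℚ) + 1) / 2) := by
  have hn4 : (4 : ℚ) ≤ (n : ℚ) := by exact_mod_cast hn
  have hd : (0 : ℚ) < 5 * (n : ℚ) - 2 := by linarith
  have h1 : p * (5 * (n : ℚ) - 2) < 2 * (n : ℚ) - 4 :=
    (lt_div_iff₀ hd).mp hp1
  have hf : (0 : ℚ) < (n.factorial : ℚ) := by
    exact_mod_cast n.factorial_pos
  nlinarith [mul_pos hf (by linarith : (0:ℚ) < 2 * (n:ℚ) - 4 - p * (5 * (n:ℚ) - 2))]
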